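/- Let N ≥ 1 and let E : ℝ → Matrix (Fin N) (Fin N) ℂ be a matrix-valued function such that each entry θ ↦ E(θ)ᵢⱼ is an analytic function from ℝ to ℂ (analytic at every real point), and such that E(θ) is Hermitian for every θ ∈ ℝ. For θ ∈ ℝ let a(θ) denote the largest eigenvalue of the Hermitian matrix E(θ). Then it is impossible that both a(0) ≤ 1/2 and a(θ) = 1 for every θ in the closed interval [1, 2]. -/

import Mathlib

/-- The analytic core of Theorem 3.2: for a real-analytic one-parameter family of
Hermitian matrices E(θ), the largest eigenvalue a(θ) cannot be at most 1/2 at θ = 0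
while being exactly 1 for every θ ∈ [1, 2]. -/
theorem no_hermitian_eigenvalue_plateau
    (N : ℕ) (hN : 1 ≤ N) (E : ℝ → Matrix (Fin N) (Fin N) ℂ)
    (hana : ∀ i j : Fin N, ∀ x : ℝ, AnalyticAt ℝ (fun θ : ℝ => E θ i j) x)
    (hherm : ∀ θ : ℝ, (E θ).IsHermitian) :
    ¬ ((⨆ i : Fin N, (hherm 0).eigenvalues i) ≤ 1 / 2 ∧
        ∀ θ ∈ Set.Icc (1 : ℝ) 2, (⨆ i : Fin N, (hherm θ).eigenvalues i) = 1) := by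
  rintro ⟨h0, h12⟩
  haveI : NeZero N := ⟨by omega⟩
  -- the analytic function θ ↦ det (1 - E θ)
  set f : ℝ → ℂ := fun θ => ((1 : Matrix (Fin N) (Fin N) ℂ) - E θ).det with hf
  -- 1 is an eigenvalue of E θ iff f θ = 0
  have key : ∀ θ : ℝ, f θ = 0 ↔ (1 : ℝ) ∈ spectrum ℝ (E θ) := by
    intro θ
    rw [spectrum.mem_iff, map_one, Matrix.isUnit_iff_isUnit_det, isUnit_iff_ne_zero,
      not_not, hf]
  -- f is analytic on ℝ
  have hfa : AnalyticOnNhd ℝ f Set.univ := by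
    intro x _
    have : AnalyticAt ℝ (fun θ : ℝ =>
        ∑ σ : Equiv.Perm (Fin N), (Equiv.Perm.sign σ : ℤ) *
          ∏ i, ((1 : Matrix (Fin N) (Fin N) ℂ) - E θ) (σ i) i) x := by
      apply Finset.analyticAt_fun_sum
      intro σ _
      apply AnalyticAt.mul analyticAt_const
      apply Finset.analyticAt_fun_prod
      intro i _
      exact (analyticAt_const (v := ((1 : Matrix (Fin N) (Fin N) ℂ) (σ i) i))).sub
        (hana (σ i) i x)
    convert this using 2 with θ
    show ((1 : Matrix (Fin N) (Fin N) ℂ) - E θ).det = _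
    rw [Matrix.det_apply']
  -- f vanishes on [1,2]
  have hvanish : ∀ θ ∈ Set.Icc (1 : ℝ) 2, f θ = 0 := by
    intro θ hθ
    rw [key]
    rw [(hherm θ).spectrum_real_eq_range_eigenvalues]
    obtain ⟨i, hi⟩ := exists_eq_ciSup_of_finite (f := (hherm θ).eigenvalues)
    exact ⟨i, by rw [hi, h12 θ hθ]⟩
  -- identity principle: f vanishes everywhere
  have hzero : f 0 = 0 := by
    have hfreq : ∃ᶠ z in nhdsWithin (3/2 : ℝ) {(3/2 : ℝ)}ᶜ, f z = 0 := by
      have hev : ∀ᶠ z in nhdsWithin (3/2 : ℝ) {(3/2 : ℝ)}ᶜ, f z = 0 := by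
        have : Set.Icc (1 : ℝ) 2 ∈ nhdsWithin (3/2 : ℝ) {(3/2 : ℝ)}ᶜ := by
          apply nhdsWithin_le_nhds
          exact Icc_mem_nhds (by norm_num) (by norm_num)
        filter_upwards [this] with z hz using hvanish z hz
      exact hev.frequently
    exact hfa.eqOn_zero_of_preconnected_of_frequently_eq_zero isPreconnected_univ
      (Set.mem_univ (3/2 : ℝ)) hfreq (Set.mem_univ 0)
  -- hence 1 is an eigenvalue of E 0, contradicting h0
  rw [key, (hherm 0).spectrum_real_eq_range_eigenvalues] at hzero
  obtain ⟨i, hi⟩ := hzero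
  have : (1 : ℝ) ≤ ⨆ i : Fin N, (hherm 0).eigenvalues i := by
    rw [← hi]
    exact le_ciSup (Set.Finite.bddAbove (Set.finite_range _)) i
  linarith
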